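/- arXiv:math/9612216 — 3 statements merged into one kernel-verified Lean document; each statement's English description precedes it below -/
import Mathlib

section
/- A nilpotent group N is torsionfree if and only if both its center C and the quotient N/C are torsionfree. -/
/-- The older Mathlib's `Monoid.IsTorsionFree` (removed since), restated with its old meaning. -/
def Monoid.IsTorsionFree (G : Type*) [Monoid G] : Prop :=
  ∀ g : G, g ≠ 1 → ¬IsOfFinOrder g

/-- Torsion-freeness gives: `g ^ n = 1` with `n ≠ 0` implies `g = 1`. -/
lemma tf_pow_eq_one {G : Type*} [Group G] (hG : Monoid.IsTorsionFree G)
    {g : G} {n : ℕ} (hn : n ≠ 0) (h : g ^ n = 1) : g = 1 := by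
  by_contra hg
  exact hG g hg (isOfFinOrder_iff_pow_eq_one.2 ⟨n, Nat.pos_of_ne_zero hn, h⟩)

open scoped commutatorElement in
/-- Key induction: unique roots relative to the lower central series. -/
lemma aux_unique_roots {G : Type*} [Group G] (hG : Monoid.IsTorsionFree G)
    {n : ℕ} (hn : n ≠ 0) :
    ∀ d j, (⊤ : Subgroup G).lowerCentralSeries (j + d) = ⊥ →
      ∀ a b : G, a⁻¹ * b ∈ (⊤ : Subgroup G).lowerCentralSeries j → a ^ n = b ^ n → a = b := by
  intro d
  induction d with
  | zero =>
    intro j hj a b hab _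
    rw [Nat.add_zero] at hj
    rw [hj, Subgroup.mem_bot] at hab
    exact inv_mul_eq_one.mp hab
  | succ d ih =>
    intro j hj a b hab hpow
    set z := a⁻¹ * b with hz
    have hb : b = a * z := by rw [hz]; group
    -- a' = b * a * b⁻¹; a⁻¹ * a' = ⁅z, a⁆ ∈ LCS (j+1)
    have hcomm : a⁻¹ * (b * a * b⁻¹) = ⁅z, a⁆ := by
      rw [hb, commutatorElement_def]; group
    have hmem : a⁻¹ * (b * a * b⁻¹) ∈ (⊤ : Subgroup G).lowerCentralSeries (j + 1) := by
      rw [hcomm, lowerCentralSeries_succ]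
      exact Subgroup.commutator_mem_commutator hab (Subgroup.mem_top a)
    have hpow' : a ^ n = (b * a * b⁻¹) ^ n := by
      rw [conj_pow, hpow]; group
    have hj' : (⊤ : Subgroup G).lowerCentralSeries ((j + 1) + d) = ⊥ := by
      rwa [show (j + 1) + d = j + (d + 1) by omega]
    have haa : a = b * a * b⁻¹ := ih (j + 1) hj' a (b * a * b⁻¹) hmem hpow'
    -- so a and b commute
    have hc : Commute a b := by
      have : b * a = a * b := by
        have := haa.symm
        calc b * a = (b * a * b⁻¹) * b := by group
          _ = a * b := by rw [← haa]
      exact this.symm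
    have hzn : z ^ n = 1 := by
      rw [hz, hc.inv_left.mul_pow, inv_pow, hpow, inv_mul_cancel]
    exact inv_mul_eq_one.mp (tf_pow_eq_one hG hn hzn)

/-- A nilpotent group `N` is torsionfree iff both its center `C` and the quotient
`N/C` are torsionfree. -/
theorem stmt_5 (N : Type*) [Group N] [Group.IsNilpotent N] :
    Monoid.IsTorsionFree N ↔
      Monoid.IsTorsionFree (Subgroup.center N) ∧
        Monoid.IsTorsionFree (N ⧸ Subgroup.center N) := by
  obtain ⟨d, hd⟩ := nilpotent_iff_lowerCentralSeries.mp (inferInstance : Group.IsNilpotent N)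
  constructor
  · intro hN
    refine ⟨fun g hg hfin => hN (g : N) (fun h => hg (Subtype.ext h)) (Submonoid.isOfFinOrder_coe.2 hfin), ?_⟩
    intro g hg hfin
    obtain ⟨x, rfl⟩ := QuotientGroup.mk_surjective g
    obtain ⟨n, hn, hpow⟩ := isOfFinOrder_iff_pow_eq_one.mp hfin
    have hx : x ^ n ∈ Subgroup.center N := by
      rw [← QuotientGroup.eq_one_iff]
      simpa using hpow
    have hc : x ∈ Subgroup.center N := by
      rw [Subgroup.mem_center_iff]
      intro y
      have hconj : x ^ n = (y * x * y⁻¹) ^ n := by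
        rw [conj_pow]
        have := (Subgroup.mem_center_iff.mp hx y).symm
        calc x ^ n = y * x ^ n * y⁻¹ * y * y⁻¹ := by
              rw [Subgroup.mem_center_iff.mp hx y]; group
          _ = y * x ^ n * y⁻¹ := by group
      have heq := aux_unique_roots hN hn.ne' d 0 (by simpa using hd) x (y * x * y⁻¹)
        (by rw [lowerCentralSeries_zero]; exact Subgroup.mem_top _) hconj
      calc y * x = (y * x * y⁻¹) * y := by group
        _ = x * y := by rw [← heq]
    exact hg ((QuotientGroup.eq_one_iff x).mpr hc)
  · rintro ⟨hC, hQ⟩ g hg hfin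
    obtain ⟨n, hn, hpow⟩ := isOfFinOrder_iff_pow_eq_one.mp hfin
    have h1 : ((g : N ⧸ Subgroup.center N)) = 1 :=
      tf_pow_eq_one hQ hn.ne' (by rw [← QuotientGroup.mk_pow, hpow]; rfl)
    have hgc : g ∈ Subgroup.center N := (QuotientGroup.eq_one_iff g).mp h1
    have h2 : (⟨g, hgc⟩ : Subgroup.center N) = 1 :=
      tf_pow_eq_one hC hn.ne' (by ext; simpa using hpow)
    exact hg (by simpa using congrArg Subtype.val h2)
end

section
/- If N is nilpotent and g, h ∈ N have finite order, then the subgroup generated by g and h is finite. -/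
open Subgroup
open scoped commutatorElement

private lemma commutator_central_right {G : Type*} [Group G] (u v w : G)
    (hw : w ∈ Subgroup.center G) : ⁅u, v * w⁆ = ⁅u, v⁆ := by
  have h1 : w * u⁻¹ * w⁻¹ = u⁻¹ := by
    rw [← Subgroup.mem_center_iff.mp hw u⁻¹, mul_inv_cancel_right]
  rw [commutatorElement_def, commutatorElement_def]
  have h2 : u * (v * w) * u⁻¹ * (v * w)⁻¹ = u * v * (w * u⁻¹ * w⁻¹) * v⁻¹ := by group
  rw [h2, h1]

private lemma commutator_central_left {G : Type*} [Group G] (u v z : G)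
    (hz : z ∈ Subgroup.center G) : ⁅u * z, v⁆ = ⁅u, v⁆ := by
  have h1 : z * v * z⁻¹ = v := by
    rw [← Subgroup.mem_center_iff.mp hz v, mul_inv_cancel_right]
  rw [commutatorElement_def, commutatorElement_def]
  have h2 : u * z * v * (u * z)⁻¹ * v⁻¹ = u * (z * v * z⁻¹) * u⁻¹ * v⁻¹ := by group
  rw [h2, h1]

private lemma commutator_eq_of_central {G : Type*} [Group G] (a b : G) :
    ⁅a, b⁆ = ⁅((QuotientGroup.mk a : G ⧸ center G)).out, ((QuotientGroup.mk b : G ⧸ center G)).out⁆ := by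
  set u := ((QuotientGroup.mk a : G ⧸ center G)).out with hu
  set v := ((QuotientGroup.mk b : G ⧸ center G)).out with hv
  have hua : (QuotientGroup.mk u : G ⧸ center G) = QuotientGroup.mk a := Quotient.out_eq _
  have hvb : (QuotientGroup.mk v : G ⧸ center G) = QuotientGroup.mk b := Quotient.out_eq _
  have hz : u⁻¹ * a ∈ center G := (QuotientGroup.eq).mp hua
  have hw : v⁻¹ * b ∈ center G := (QuotientGroup.eq).mp hvb
  have ha : a = u * (u⁻¹ * a) := by group
  have hb : b = v * (v⁻¹ * b) := by group
  conv_lhs => rw [ha, hb]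
  rw [commutator_central_left _ _ _ hz, commutator_central_right _ _ _ hw]

private lemma aux (n : ℕ) : ∀ (G : Type*) [Group G] [Group.IsNilpotent G],
    Group.nilpotencyClass G ≤ n → ∀ S : Set G, S.Finite → (∀ x ∈ S, IsOfFinOrder x) →
    Subgroup.closure S = ⊤ → Finite G := by
  induction n with
  | zero =>
    intro G _ _ hc S _ _ _
    have : Subsingleton G := nilpotencyClass_zero_iff_subsingleton.mp (Nat.le_zero.mp hc)
    exact Finite.of_subsingleton
  | succ n ih =>
    intro G _ _ hc S hSfin hStor hStop
    have hQc : Group.nilpotencyClass (G ⧸ center G) ≤ n := by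
      rw [nilpotencyClass_quotient_center]
      omega
    have hQfin : Finite (G ⧸ center G) := by
      refine ih (G ⧸ center G) hQc (QuotientGroup.mk '' S) (hSfin.image _) ?_ ?_
      · rintro x ⟨y, hy, rfl⟩
        exact (QuotientGroup.mk' (center G)).isOfFinOrder (hStor y hy)
      · have : (Subgroup.closure S).map (QuotientGroup.mk' (center G)) = ⊤ := by
          rw [hStop]
          simpa using Subgroup.map_top_of_surjective _ (QuotientGroup.mk'_surjective _)
        rw [MonoidHom.map_closure] at this
        exact this
    have hcs : Finite (commutatorSet G) := by
      have hsub : commutatorSet G ⊆ Set.range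
          (fun p : (G ⧸ center G) × (G ⧸ center G) => ⁅p.1.out, p.2.out⁆) := by
        rintro x ⟨a, b, rfl⟩
        exact ⟨(QuotientGroup.mk a, QuotientGroup.mk b), (commutator_eq_of_central a b).symm⟩
      exact (Set.finite_range _).subset hsub
    have hcomm : Finite (_root_.commutator G) := by infer_instance
    have hFG : Group.FG G := ⟨⟨hSfin.toFinset, by simpa using hStop⟩⟩
    have hofsurj : Function.Surjective (Abelianization.of : G →* Abelianization G) :=
      fun x => Quotient.inductionOn' x fun a => ⟨a, rfl⟩
    have hAbFin : Finite (Abelianization G) := by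
      have : Group.FG (Abelianization G) := Group.fg_of_surjective hofsurj
      refine CommGroup.finite_of_fg_torsion _ ?_
      have hle : Subgroup.closure (Abelianization.of '' S) ≤ CommGroup.torsion (Abelianization G) := by
        rw [Subgroup.closure_le]
        rintro x ⟨y, hy, rfl⟩
        exact Abelianization.of.isOfFinOrder (hStor y hy)
      have htop : Subgroup.closure (Abelianization.of '' S) = ⊤ := by
        have : (Subgroup.closure S).map Abelianization.of = ⊤ := by
          rw [hStop]
          simpa using Subgroup.map_top_of_surjective _ hofsurj
        rw [MonoidHom.map_closure] at this
        exact this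
      intro x
      exact hle (htop ▸ Subgroup.mem_top x)
    have : Finite (G ⧸ _root_.commutator G) := hAbFin
    exact Finite.of_subgroup_quotient (_root_.commutator G)

/-- If `N` is nilpotent and `g, h ∈ N` have finite order, then the subgroup
generated by `g` and `h` is finite. -/
theorem stmt_6 (N : Type*) [Group N] [Group.IsNilpotent N]
    (g h : N) (hg : IsOfFinOrder g) (hh : IsOfFinOrder h) :
    Finite (Subgroup.closure ({g, h} : Set N)) := by
  set H := Subgroup.closure ({g, h} : Set N)
  refine aux (Group.nilpotencyClass H) H le_rfl ((↑) ⁻¹' ({g, h} : Set N)) ?_ ?_ ?_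
  · have : Function.Injective ((↑) : H → N) := Subtype.val_injective
    exact Set.Finite.preimage this.injOn ((Set.finite_singleton h).insert g)
  · rintro ⟨x, hx⟩ hmem
    simp only [Set.mem_preimage, Set.mem_insert_iff, Set.mem_singleton_iff] at hmem
    have hfo : IsOfFinOrder x := by rcases hmem with rfl | rfl <;> assumption
    rwa [← Submonoid.isOfFinOrder_coe]
  · exact Subgroup.closure_closure_coe_preimage
end

section
/- If a nilpotent group is a free product G * H of two groups, then one of G or H is trivial. -/
namespace Stmt14Aux

open Monoid Monoid.CoprodI Subgroup
open scoped commutatorElement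

universe u v

/-- The two-element family of groups. -/
def Fam (G : Type u) (H : Type v) : Bool → Type (max u v)
  | true => ULift.{v} G
  | false => ULift.{u} H

instance famGroup (G : Type u) (H : Type v) [Group G] [Group H] :
    ∀ b, Group (Fam G H b)
  | true => inferInstanceAs (Group (ULift G))
  | false => inferInstanceAs (Group (ULift H))

variable {ι : Type*} {M : ι → Type*} [∀ i, Group (M i)]

theorem neword_head_ne_one : ∀ {i j} (w : NeWord M i j), w.head ≠ 1
  | _, _, .singleton _ h => h
  | _, _, .append w₁ _ _ => neword_head_ne_one w₁

theorem word_prod_injective :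
    Function.Injective (Word.prod : Word M → CoprodI M) := by
  classical
  exact fun _ _ h => Word.equiv.symm.injective h

theorem neword_prod_injective {i j k l} {w₁ : NeWord M i j} {w₂ : NeWord M k l}
    (h : w₁.prod = w₂.prod) : w₁.toList = w₂.toList := by
  have := word_prod_injective (M := M) h
  have := congrArg Word.toList this
  simpa [NeWord.toWord] using this

theorem exists_not_commute {i₀ i₁ : ι} (hne : i₀ ≠ i₁)
    [Nontrivial (M i₀)] [Nontrivial (M i₁)]
    {x : CoprodI M} (hx : x ≠ 1) : ∃ z : CoprodI M, x * z ≠ z * x := by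
  classical
  -- get a reduced nonempty word representing x
  have hprodw : Word.prod (Word.equiv x) = x := Word.equiv.symm_apply_apply x
  have hwne : Word.equiv x ≠ Word.empty := by
    intro hemp
    apply hx
    rw [← hprodw, hemp, Word.prod_empty]
  obtain ⟨i, j, w, hw⟩ := NeWord.of_word (Word.equiv x) hwne
  have hprod : w.prod = x := by rw [NeWord.prod, hw, hprodw]
  by_cases hij : i = j
  · -- the word starts and ends in the same factor; conjugate by an element of another factor
    subst hij
    -- pick k ≠ i with a nontrivial element c
    obtain ⟨k, hk, c, hc⟩ : ∃ k, k ≠ i ∧ ∃ c : M k, c ≠ 1 := by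
      rcases eq_or_ne i₀ i with rfl | h₀
      · obtain ⟨c, hc⟩ := exists_ne (1 : M i₁)
        exact ⟨i₁, hne.symm, c, hc⟩
      · obtain ⟨c, hc⟩ := exists_ne (1 : M i₀)
        exact ⟨i₀, h₀, c, hc⟩
    refine ⟨of c, fun hcomm => ?_⟩
    have hcinv : (c⁻¹ : M k) ≠ 1 := inv_ne_one.mpr hc
    set W : NeWord M k k :=
      .append (.append (.singleton c⁻¹ hcinv) hk w) hk.symm (.singleton c hc) with hW
    have hWprod : W.prod = x := by
      have : (of c)⁻¹ * (x * of c) = x := by rw [hcomm]; group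
      simpa [hW, hprod, mul_assoc] using this
    have hl : W.toList = w.toList := neword_prod_injective (by rw [hWprod, hprod])
    have h1 : W.toList.head? = some ⟨k, W.head⟩ := W.toList_head?
    have h2 : w.toList.head? = some ⟨i, w.head⟩ := w.toList_head?
    rw [hl, h2] at h1
    exact hk (congrArg Sigma.fst (Option.some.inj h1.symm))
  · -- the word starts and ends in different factors; conjugate its head by x
    refine ⟨of w.head, fun hcomm => ?_⟩
    have hhead := neword_head_ne_one w
    set W : NeWord M i i :=
      .append (.append w (Ne.symm hij) (.singleton w.head hhead)) hij w.inv with hW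
    have hWprod : W.prod = of w.head := by
      have : x * of w.head * x⁻¹ = of w.head := by
        rw [hcomm]; group
      simpa [hW, hprod, NeWord.inv_prod, mul_assoc] using this
    have hl : W.toList = (NeWord.singleton w.head hhead).toList := by
      refine neword_prod_injective ?_
      rw [hWprod, NeWord.prod_singleton]
    have hlen := congrArg List.length hl
    have hpos : 0 < w.toList.length := List.length_pos_iff.mpr w.toList_ne_nil
    simp only [hW, NeWord.toList, List.length_append, List.length_singleton] at hlen
    omega

theorem not_isNilpotent {i₀ i₁ : ι} (hne : i₀ ≠ i₁)
    [Nontrivial (M i₀)] [Nontrivial (M i₁)] :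
    ¬ Group.IsNilpotent (CoprodI M) := by
  intro hnil
  rw [_root_.nilpotent_iff_lowerCentralSeries] at hnil
  obtain ⟨n, hn⟩ := hnil
  have key : ∀ n, ∃ x ∈ (⊤ : Subgroup (CoprodI M)).lowerCentralSeries n, x ≠ 1 := by
    intro n
    induction n with
    | zero =>
      obtain ⟨g, hg⟩ := exists_ne (1 : M i₀)
      refine ⟨of g, mem_top _, fun h => hg ?_⟩
      exact CoprodI.of_injective i₀ (by rw [h, map_one])
    | succ n ih =>
      obtain ⟨x, hx, hx1⟩ := ih
      obtain ⟨z, hz⟩ := exists_not_commute hne hx1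
      refine ⟨⁅x, z⁆, ?_, ?_⟩
      · exact Subgroup.commutator_mem_commutator hx (mem_top z)
      · rw [Ne, commutatorElement_eq_one_iff_mul_comm]
        exact hz
  obtain ⟨x, hx, hx1⟩ := key n
  rw [hn, Subgroup.mem_bot] at hx
  exact hx1 hx

end Stmt14Aux

/-- If a free product `G ∗ H` of two groups is nilpotent, then `G` or `H` is trivial. -/
theorem stmt_14 (G H : Type*) [Group G] [Group H]
    (h : Group.IsNilpotent (Monoid.Coprod G H)) :
    Subsingleton G ∨ Subsingleton H := by
  by_contra hcon
  push_neg at hcon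
  obtain ⟨hG, hH⟩ := hcon
  haveI : Nontrivial (Stmt14Aux.Fam G H true) :=
    inferInstanceAs (Nontrivial (ULift G))
  haveI : Nontrivial (Stmt14Aux.Fam G H false) :=
    inferInstanceAs (Nontrivial (ULift H))
  haveI := h
  set ψ : Monoid.Coprod G H →* Monoid.CoprodI (Stmt14Aux.Fam G H) :=
    Monoid.Coprod.lift
      ((Monoid.CoprodI.of (M := Stmt14Aux.Fam G H) (i := true)).comp
        (MulEquiv.ulift.symm : G ≃* ULift G).toMonoidHom)
      ((Monoid.CoprodI.of (M := Stmt14Aux.Fam G H) (i := false)).comp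
        (MulEquiv.ulift.symm : H ≃* ULift H).toMonoidHom) with hψ
  have hsurj : Function.Surjective ψ := by
    intro x
    induction x using Monoid.CoprodI.induction_on with
    | one => exact ⟨1, map_one ψ⟩
    | of i m =>
      cases i with
      | true =>
        refine ⟨Monoid.Coprod.inl (MulEquiv.ulift (α := G) m), ?_⟩
        simp only [hψ, Monoid.Coprod.lift_apply_inl, MonoidHom.comp_apply,
          MulEquiv.coe_toMonoidHom]
        exact congrArg (Monoid.CoprodI.of (M := Stmt14Aux.Fam G H) (i := true))
          ((MulEquiv.ulift (α := G)).symm_apply_apply m)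
      | false =>
        refine ⟨Monoid.Coprod.inr (MulEquiv.ulift (α := H) m), ?_⟩
        simp only [hψ, Monoid.Coprod.lift_apply_inr, MonoidHom.comp_apply,
          MulEquiv.coe_toMonoidHom]
        exact congrArg (Monoid.CoprodI.of (M := Stmt14Aux.Fam G H) (i := false))
          ((MulEquiv.ulift (α := H)).symm_apply_apply m)
    | mul x y hx hy =>
      obtain ⟨a, ha⟩ := hx
      obtain ⟨b, hb⟩ := hy
      exact ⟨a * b, by rw [map_mul, ha, hb]⟩
  haveI := nilpotent_of_surjective ψ hsurj
  exact Stmt14Aux.not_isNilpotent (M := Stmt14Aux.Fam G H)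
    (i₀ := true) (i₁ := false) (by decide) this
end
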